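/- If (E_n) is a sequence of pairwise independent events in a probability space with ∑_n P(E_n) = ∞, then P(limsup E_n) = 1. -/

import Mathlib

open MeasureTheory Filter
open scoped ENNReal NNReal

private lemma bc_amgm (a b : ℝ≥0∞) : 2 * a * b ≤ a ^ 2 + b ^ 2 := by
  rcases eq_or_ne a 0 with rfl | ha0
  · simp
  rcases eq_or_ne b 0 with rfl | hb0
  · simp
  rcases eq_or_ne a ⊤ with rfl | hat
  · have h2 : (⊤ : ℝ≥0∞) ^ 2 + b ^ 2 = ⊤ := by
      rw [ENNReal.top_pow (by norm_num), top_add]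
    rw [h2]; exact le_top
  rcases eq_or_ne b ⊤ with rfl | hbt
  · have h2 : a ^ 2 + (⊤ : ℝ≥0∞) ^ 2 = ⊤ := by
      rw [ENNReal.top_pow (by norm_num), add_top]
    rw [h2]; exact le_top
  lift a to ℝ≥0 using hat
  lift b to ℝ≥0 using hbt
  rw [← ENNReal.coe_ofNat, ← ENNReal.coe_mul, ← ENNReal.coe_mul, ← ENNReal.coe_pow,
    ← ENNReal.coe_pow, ← ENNReal.coe_add, ENNReal.coe_le_coe, ← NNReal.coe_le_coe]
  push_cast
  nlinarith [sq_nonneg ((a : ℝ) - b)]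

/-- Second Borel–Cantelli lemma (pairwise independence version): if the events `E n`
are pairwise independent and `∑ P(E n) = ∞`, then `P(limsup E n) = 1`. -/
theorem borel_cantelli_second
    {X : Type*} [MeasurableSpace X] (P : Measure X) [IsProbabilityMeasure P]
    (E : ℕ → Set X) (hmeas : ∀ n, MeasurableSet (E n))
    (hindep : ∀ n m, n ≠ m → P (E n ∩ E m) = P (E n) * P (E m))
    (hsum : ∑' n, P (E n) = ∞) :
    P (Filter.limsup E Filter.atTop) = 1 := by
  classical
  set f : ℕ → X → ℝ≥0∞ := fun n => (E n).indicator 1 with hf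
  set S : ℕ → X → ℝ≥0∞ := fun N x => ∑ k ∈ Finset.range N, f k x with hS
  set T : X → ℝ≥0∞ := fun x => ∑' k, f k x with hT
  set m : ℕ → ℝ≥0∞ := fun N => ∑ k ∈ Finset.range N, P (E k) with hm
  have hfmeas : ∀ k, Measurable (f k) := fun k => measurable_one.indicator (hmeas k)
  have hSmeas : ∀ N, Measurable (S N) := fun N =>
    Finset.measurable_sum _ fun k _ => hfmeas k
  have hTmeas : Measurable T := Measurable.ennreal_tsum hfmeas
  have hintf : ∀ k, ∫⁻ x, f k x ∂P = P (E k) := fun k => lintegral_indicator_one (hmeas k)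
  have hintS : ∀ N, ∫⁻ x, S N x ∂P = m N := by
    intro N
    rw [hS, lintegral_finset_sum _ fun k _ => hfmeas k]
    exact Finset.sum_congr rfl fun k _ => hintf k
  have hm_ne_top : ∀ N, m N ≠ ⊤ := by
    intro N
    refine ne_top_of_le_ne_top ?_ (Finset.sum_le_sum fun k _ => prob_le_one (μ := P) (s := E k))
    simp
  -- second moment bound
  have hintS2 : ∀ N, ∫⁻ x, (S N x) ^ 2 ∂P ≤ m N + m N * m N := by
    intro N
    have h1 : ∀ x, (S N x) ^ 2 =
        ∑ j ∈ Finset.range N, ∑ k ∈ Finset.range N, (E j ∩ E k).indicator 1 x := by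
      intro x
      rw [sq, hS, Finset.sum_mul_sum]
      refine Finset.sum_congr rfl fun j _ => Finset.sum_congr rfl fun k _ => ?_
      rw [Set.inter_indicator_one]
      rfl
    have h2 : ∫⁻ x, (S N x) ^ 2 ∂P =
        ∑ j ∈ Finset.range N, ∑ k ∈ Finset.range N, P (E j ∩ E k) := by
      simp_rw [h1]
      rw [lintegral_finset_sum _ fun j _ =>
        Finset.measurable_sum _ fun k _ => measurable_one.indicator ((hmeas j).inter (hmeas k))]
      refine Finset.sum_congr rfl fun j _ => ?_
      rw [lintegral_finset_sum _ fun k _ => measurable_one.indicator ((hmeas j).inter (hmeas k))]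
      exact Finset.sum_congr rfl fun k _ => lintegral_indicator_one ((hmeas j).inter (hmeas k))
    rw [h2]
    have h3 : ∀ j ∈ Finset.range N,
        ∑ k ∈ Finset.range N, P (E j ∩ E k) ≤ P (E j) + P (E j) * m N := by
      intro j hj
      rw [← Finset.add_sum_erase _ _ hj, Set.inter_self]
      gcongr
      calc ∑ k ∈ (Finset.range N).erase j, P (E j ∩ E k)
          = ∑ k ∈ (Finset.range N).erase j, P (E j) * P (E k) :=
            Finset.sum_congr rfl fun k hk =>
              hindep j k (Ne.symm (Finset.ne_of_mem_erase hk))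
        _ ≤ ∑ k ∈ Finset.range N, P (E j) * P (E k) :=
            Finset.sum_le_sum_of_subset (Finset.erase_subset _ _)
        _ = P (E j) * m N := by rw [← Finset.mul_sum]
    calc ∑ j ∈ Finset.range N, ∑ k ∈ Finset.range N, P (E j ∩ E k)
        ≤ ∑ j ∈ Finset.range N, (P (E j) + P (E j) * m N) := Finset.sum_le_sum h3
      _ = m N + m N * m N := by rw [Finset.sum_add_distrib, ← Finset.sum_mul]
  -- key estimate: for any c, δ, if δ * m N is large then P {c ≤ T} is close to 1
  have hkey : ∀ (c δ : ℝ≥0∞) (N : ℕ), c ≤ δ * m N → 1 ≤ δ * m N →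
      1 ≤ P {x | c ≤ T x} + 3 * δ := by
    intro c δ N hc h1
    set B : Set X := {x | c ≤ S N x} with hB
    have hBmeas : MeasurableSet B := measurableSet_le measurable_const (hSmeas N)
    -- m N ≤ ∫ over B of S N + c
    have step1 : m N ≤ (∫⁻ x, B.indicator (S N) x ∂P) + c := by
      rw [← hintS N]
      calc ∫⁻ x, S N x ∂P ≤ ∫⁻ x, (B.indicator (S N) x + c) ∂P := by
            refine lintegral_mono fun x => ?_
            by_cases hx : x ∈ B
            · rw [Set.indicator_of_mem hx]; exact le_add_right le_rfl
            · rw [Set.indicator_of_notMem hx, zero_add]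
              exact le_of_not_ge hx
        _ = (∫⁻ x, B.indicator (S N) x ∂P) + c := by
            rw [lintegral_add_right _ measurable_const, lintegral_const, measure_univ, mul_one]
    -- AM-GM step with t = m N
    have step2 : 2 * m N * ∫⁻ x, B.indicator (S N) x ∂P ≤
        (m N) ^ 2 * P B + (m N + m N * m N) := by
      have hmeasB : Measurable (B.indicator (S N)) := (hSmeas N).indicator hBmeas
      calc 2 * m N * ∫⁻ x, B.indicator (S N) x ∂P
          = ∫⁻ x, 2 * m N * B.indicator (S N) x ∂P := (lintegral_const_mul _ hmeasB).symm
        _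
          ≤ ∫⁻ x, ((m N) ^ 2 * B.indicator 1 x + (S N x) ^ 2) ∂P := by
            refine lintegral_mono fun x => ?_
            by_cases hx : x ∈ B
            · rw [Set.indicator_of_mem hx, Set.indicator_of_mem hx, Pi.one_apply, mul_one]
              exact bc_amgm _ _
            · simp [Set.indicator_of_notMem hx]
        _ ≤ (m N) ^ 2 * P B + (m N + m N * m N) := by
            rw [lintegral_add_right _ ((hSmeas N).pow_const 2),
              lintegral_const_mul _ (measurable_one.indicator hBmeas),
              lintegral_indicator_one hBmeas]
            exact add_le_add_right (hintS2 N) _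
      
    have hmN0 : m N ≠ 0 := by
      intro h0
      rw [h0, mul_zero] at h1
      exact (not_le.mpr zero_lt_one) h1
    -- combine
    have main : (m N) ^ 2 * 2 ≤ (m N) ^ 2 * (P B + 1 + 3 * δ) := by
      have hmle : m N ≤ δ * (m N) ^ 2 := by
        calc m N = 1 * m N := (one_mul _).symm
          _ ≤ (δ * m N) * m N := by gcongr
          _ = δ * (m N) ^ 2 := by ring
      have hcle : 2 * m N * c ≤ 2 * δ * (m N) ^ 2 := by
        calc 2 * m N * c ≤ 2 * m N * (δ * m N) := by gcongr
          _ = 2 * δ * (m N) ^ 2 := by ring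
      calc (m N) ^ 2 * 2 = 2 * m N * m N := by ring
        _ ≤ 2 * m N * ((∫⁻ x, B.indicator (S N) x ∂P) + c) := by gcongr
        _ = 2 * m N * ∫⁻ x, B.indicator (S N) x ∂P + 2 * m N * c := by ring
        _ ≤ ((m N) ^ 2 * P B + (m N + m N * m N)) + 2 * δ * (m N) ^ 2 :=
            add_le_add step2 hcle
        _ ≤ ((m N) ^ 2 * P B + (δ * (m N) ^ 2 + (m N) ^ 2)) + 2 * δ * (m N) ^ 2 := by
            have hsq : m N * m N = (m N) ^ 2 := (sq (m N)).symm
            exact add_le_add (add_le_add_right (add_le_add hmle hsq.le) _) le_rfl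
        _ = (m N) ^ 2 * (P B + 1 + 3 * δ) := by ring
    have hpow_ne : (m N) ^ 2 ≠ 0 := pow_ne_zero _ hmN0
    have hpow_top : (m N) ^ 2 ≠ ⊤ := by
      exact ENNReal.pow_ne_top (hm_ne_top N)
    have h2le : (2 : ℝ≥0∞) ≤ P B + 1 + 3 * δ :=
      (ENNReal.mul_le_mul_iff_right hpow_ne hpow_top).mp main
    have h1le : 1 ≤ P B + 3 * δ := by
      have : (1 : ℝ≥0∞) + 1 ≤ (P B + 3 * δ) + 1 := by
        calc (1 : ℝ≥0∞) + 1 = 2 := one_add_one_eq_two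
          _ ≤ P B + 1 + 3 * δ := h2le
          _ = (P B + 3 * δ) + 1 := by ring
      exact (ENNReal.add_le_add_iff_right ENNReal.one_ne_top).mp this
    have hBsub : B ⊆ {x | c ≤ T x} := by
      intro x hx
      exact le_trans hx (ENNReal.sum_le_tsum (Finset.range N))
    calc (1 : ℝ≥0∞) ≤ P B + 3 * δ := h1le
      _ ≤ P {x | c ≤ T x} + 3 * δ := add_le_add_left (measure_mono hBsub) _
  -- m N → ∞
  have hmtop : Tendsto m atTop (nhds ⊤) := by
    have := ENNReal.tendsto_nat_tsum fun n => P (E n)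
    rwa [hsum] at this
  -- for each finite c, P {c ≤ T} = 1
  have hfull : ∀ c : ℝ≥0∞, c ≠ ⊤ → P {x | c ≤ T x} = 1 := by
    intro c hc
    refine le_antisymm prob_le_one ?_
    refine ENNReal.le_of_forall_pos_le_add fun ε hε _ => ?_
    set δ : ℝ≥0∞ := (ε : ℝ≥0∞) / 3 with hδ
    have hδ0 : δ ≠ 0 := by
      simp [hδ, ENNReal.div_eq_zero_iff, hε.ne']
    have hδtop : δ ≠ ⊤ := by
      simp [hδ, ENNReal.div_eq_top]
    -- choose N with (max c 1) / δ < m N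
    have hMne : max c 1 / δ ≠ ⊤ := by
      exact (ENNReal.div_lt_top (by simp [hc]) hδ0).ne
    obtain ⟨N, hN⟩ := (hmtop.eventually (Ioi_mem_nhds (lt_top_iff_ne_top.mpr hMne))).exists
    have hdm : max c 1 ≤ δ * m N := by
      rw [mul_comm]
      exact (ENNReal.div_le_iff_le_mul (Or.inl hδ0) (Or.inl hδtop)).mp (le_of_lt hN)
    have h3δ : 3 * δ ≤ ε := by
      rw [hδ, ENNReal.mul_div_cancel' (by norm_num) (by norm_num)]
    calc (1 : ℝ≥0∞) ≤ P {x | c ≤ T x} + 3 * δ :=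
          hkey c δ N (le_trans (le_max_left _ _) hdm) (le_trans (le_max_right _ _) hdm)
      _ ≤ P {x | c ≤ T x} + ε := by gcongr
  -- limsup = {T = ⊤}
  have hlimsup : Filter.limsup E Filter.atTop = {x | T x = ⊤} := by
    ext x
    rw [mem_limsup_iff_frequently_mem, Nat.frequently_atTop_iff_infinite]
    have hTx : T x = ({n | x ∈ E n}.encard : ℝ≥0∞) := by
      have hpt : ∀ k, f k x = ({n | x ∈ E n} : Set ℕ).indicator 1 k := by
        intro k
        simp only [hf, Set.indicator, Set.mem_setOf_eq, Pi.one_apply]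
      calc T x = ∑' k, ({n | x ∈ E n} : Set ℕ).indicator 1 k := tsum_congr hpt
        _ = ∑' (_ : {n | x ∈ E n}), (1 : ℝ≥0∞) := (tsum_subtype _ 1).symm
        _ = ({n | x ∈ E n}.encard : ℝ≥0∞) := ENNReal.tsum_set_one _
    rw [Set.mem_setOf_eq, hTx, ← ENat.toENNReal_top, ENat.toENNReal_inj,
      Set.encard_eq_top_iff]
  rw [hlimsup]
  have hinter : {x | T x = ⊤} = ⋂ n : ℕ, {x | (n : ℝ≥0∞) ≤ T x} := by
    ext x
    simp only [Set.mem_setOf_eq, Set.mem_iInter]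
    constructor
    · intro h n; rw [h]; exact le_top
    · intro h
      by_contra htop
      obtain ⟨n, hn⟩ := ENNReal.exists_nat_gt htop
      exact (not_le.mpr hn) (h n)
  rw [hinter]
  have hanti : Antitone (fun n : ℕ => {x | (n : ℝ≥0∞) ≤ T x}) := by
    intro i j hij x hx
    simp only [Set.mem_setOf_eq] at hx ⊢
    exact le_trans (show ((i : ℝ≥0∞) ≤ j) by exact_mod_cast hij) hx
  rw [hanti.measure_iInter
    (fun n => (measurableSet_le measurable_const hTmeas).nullMeasurableSet)
    ⟨0, measure_ne_top P _⟩]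
  simp only [hfull _ (ENNReal.natCast_ne_top _), iInf_const]
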